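/- For k even with s = (k−2)/2 ≥ 1 and n ≥ s + 2, the graph S_{n,s}^+ = K_s ∨ (K_2 ∪ I_{n−s−2}) on n vertices contains no cycle of length at least k. -/

import Mathlib

/-- The graph `S_{n,a,b} = K_a ∨ (K_b ∪ I_{n-a-b})` on `n` vertices: the first
`a` vertices form a clique joined to everything, the next `b` vertices form a
clique, and the remaining `n-a-b` vertices are independent. -/
def Snab (n a b : ℕ) : SimpleGraph (Fin n) where
  Adj x y := x ≠ y ∧
    ((x : ℕ) < a ∨ (y : ℕ) < a ∨ ((x : ℕ) < a + b ∧ (y : ℕ) < a + b))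
  symm := by
    constructor
    intro x y ⟨h1, h2⟩
    exact ⟨h1.symm, by tauto⟩
  loopless := by
    constructor
    intro x ⟨h1, _⟩
    exact h1 rfl

/-- The circumference of a graph: the length of a longest cycle
(`0` if there is no cycle). -/
noncomputable def circumference {V : Type*} (G : SimpleGraph V) : ℕ :=
  sSup {n | ∃ (u : V) (c : G.Walk u u), c.IsCycle ∧ c.length = n}

/-- The number of vertices of a longest path of `G`. -/
noncomputable def longestPathVerts {V : Type*} (G : SimpleGraph V) : ℕ :=
  sSup {n | ∃ (u v : V) (p : G.Walk u v), p.IsPath ∧ p.length + 1 = n}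


open SimpleGraph Finset in
/-- For even `k = 2s + 2` with `s >= 1` and `n >= s + 2`, the graph
`S_{n,s}^+` (the join of `K_s` with the disjoint union of `K_2` and
`I_{n-s-2}`) has no cycle of length at least `k`. -/
theorem Snsplus_no_long_cycle (n s k : ℕ) (hs : 1 ≤ s) (hk : k = 2 * s + 2)
    (hn : s + 2 ≤ n) :
    ∀ (u : Fin n) (c : (Snab n s 2).Walk u u), c.IsCycle → c.length < k := by
  intro u c hc
  have hedges : c.edges.Nodup := hc.isTrail.edges_nodup
  have hdartsnd : (c.darts.map (·.snd)).Nodup := by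
    rw [Walk.map_snd_darts]; exact hc.support_nodup
  have hdartfst : (c.darts.map (·.fst)).Nodup := by
    rw [Walk.map_fst_darts]
    have h1 : c.support = u :: c.support.tail := c.support_eq_cons
    have h2 : c.support.tail ≠ [] := by
      intro h
      have h5 := hc.three_le_length
      have h4 := c.length_support
      rw [h1, h] at h4
      simp only [List.length_cons, List.length_nil] at h4
      omega
    have h3 : c.support.tail.getLast h2 = u := by
      rw [List.getLast_tail]
      exact c.getLast_support
    rw [h1]
    rw [List.dropLast_cons_of_ne_nil h2]
    refine List.nodup_cons.mpr ⟨?_, hc.support_nodup.sublist (List.dropLast_sublist _)⟩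
    intro hu
    have hnd := hc.support_nodup
    have heq : c.support.tail = c.support.tail.dropLast ++ [c.support.tail.getLast h2] :=
      (List.dropLast_append_getLast h2).symm
    rw [heq] at hnd
    have hdisj := List.disjoint_of_nodup_append hnd
    exact hdisj hu (by simp [h3])
  have hdnodup : c.darts.Nodup := hdartsnd.of_map
  -- the finset of darts
  classical
  set D := c.darts.toFinset with hD
  have hcardD : D.card = c.length := by
    rw [hD, List.toFinset_card_of_nodup hdnodup, Walk.length_darts]
  -- predicates
  set p : (Snab n s 2).Dart → Prop := fun d => (d.snd : ℕ) < s with hp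
  set q : (Snab n s 2).Dart → Prop := fun d => (d.fst : ℕ) < s with hq
  have e1 : (D.filter p).card + (D.filter fun d => ¬ p d).card = D.card :=
    Finset.card_filter_add_card_filter_not _
  have e2 : (((D.filter fun d => ¬ p d)).filter q).card
      + ((D.filter fun d => ¬ p d).filter fun d => ¬ q d).card
      = (D.filter fun d => ¬ p d).card :=
    Finset.card_filter_add_card_filter_not _
  have e3 : (D.filter fun d => ¬ p d).filter q = D.filter fun d => ¬ p d ∧ q d := by
    rw [Finset.filter_filter]
  have e4 : (D.filter fun d => ¬ p d).filter (fun d => ¬ q d)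
      = D.filter fun d => ¬ p d ∧ ¬ q d := by
    rw [Finset.filter_filter]
  rw [e3, e4] at e2
  have hsplit : D.card = (D.filter p).card + ((D.filter fun d => ¬ p d ∧ q d).card
      + (D.filter fun d => ¬ p d ∧ ¬ q d).card) := by omega
  -- bound 1
  have hb1 : (D.filter p).card ≤ s := by
    have : (D.filter p).card ≤ (Finset.range s).card := by
      apply Finset.card_le_card_of_injOn (fun d => (d.snd : ℕ))
      · intro d hd
        simp only [Finset.mem_coe, Finset.mem_filter] at hd
        simpa using hd.2
      · intro a ha b hb hab
        simp only [Finset.mem_coe, Finset.mem_filter, hD, List.mem_toFinset] at ha hb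
        have := List.inj_on_of_nodup_map hdartsnd ha.1 hb.1 (Fin.val_injective hab)
        exact this
    simpa using this
  have hb2 : (D.filter fun d => ¬ p d ∧ q d).card ≤ s := by
    have : (D.filter fun d => ¬ p d ∧ q d).card ≤ (Finset.range s).card := by
      apply Finset.card_le_card_of_injOn (fun d => (d.fst : ℕ))
      · intro d hd
        simp only [Finset.mem_coe, Finset.mem_filter] at hd
        simpa using hd.2.2
      · intro a ha b hb hab
        simp only [Finset.mem_coe, Finset.mem_filter, hD, List.mem_toFinset] at ha hb
        exact List.inj_on_of_nodup_map hdartfst ha.1 hb.1 (Fin.val_injective hab)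
    simpa using this
  -- bound 3
  have hsn : s < n := by omega
  have hs1n : s + 1 < n := by omega
  have hedgeval : ∀ d ∈ D.filter fun d => ¬ p d ∧ ¬ q d,
      d.edge = s(⟨s, hsn⟩, (⟨s + 1, hs1n⟩ : Fin n)) := by
    intro d hd
    simp only [Finset.mem_filter, hp, hq] at hd
    obtain ⟨hdm, hps, hqs⟩ := hd
    have hadj := d.adj
    obtain ⟨hne, hor⟩ := hadj
    have hf2 : (d.fst : ℕ) < s + 2 ∧ (d.snd : ℕ) < s + 2 := by
      rcases hor with h | h | h
      · omega
      · omega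
      · exact h
    have hvne : (d.fst : ℕ) ≠ (d.snd : ℕ) := by
      intro h; exact hne (Fin.val_injective h)
    have hcase : ((d.fst : ℕ) = s ∧ (d.snd : ℕ) = s + 1) ∨
        ((d.fst : ℕ) = s + 1 ∧ (d.snd : ℕ) = s) := by omega
    rcases hcase with ⟨h1, h2⟩ | ⟨h1, h2⟩
    · have e1 : d.fst = ⟨s, hsn⟩ := Fin.ext h1
      have e2 : d.snd = ⟨s + 1, hs1n⟩ := Fin.ext h2
      rw [SimpleGraph.Dart.edge, show d.toProd = (d.fst, d.snd) from rfl, e1, e2]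
    · have e1 : d.fst = ⟨s + 1, hs1n⟩ := Fin.ext h1
      have e2 : d.snd = ⟨s, hsn⟩ := Fin.ext h2
      rw [SimpleGraph.Dart.edge]
      rw [show d.toProd = (d.fst, d.snd) from rfl, e1, e2]
      exact Sym2.eq_swap
  have hb3 : (D.filter fun d => ¬ p d ∧ ¬ q d).card ≤ 1 := by
    rw [Finset.card_le_one]
    intro a ha b hb
    have hea := hedgeval a ha
    have heb := hedgeval b hb
    simp only [Finset.mem_filter, hD, List.mem_toFinset] at ha hb
    have hemap : (c.darts.map SimpleGraph.Dart.edge).Nodup := hedges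
    exact List.inj_on_of_nodup_map hemap ha.1 hb.1 (hea.trans heb.symm)
  omega
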